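/- Let d ≥ 1 and n ≥ d + 2, and let y : Fin n → EuclideanSpace ℝ (Fin (n - d - 1)) be a sequence of vectors such that (1) Submodule.span ℝ (Set.range y) = ⊤ and (2) ∑ i, y i = 0. Then there exists x : Fin n → EuclideanSpace ℝ (Fin d) with affineSpan ℝ (Set.range x) = ⊤ such that y is a Gale transform of x. -/

import Mathlib

/-- `y` is a Gale transform of `x`: the linear evaluation map
`α ↦ (⟪α, y i⟫)ᵢ` is injective and its range is the space of affine dependences
`K(x) = {λ | ∑ λ i • x i = 0 ∧ ∑ λ i = 0}`. -/
def IsGaleTransform {n d e : ℕ} (x : Fin n → EuclideanSpace ℝ (Fin d))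
    (y : Fin n → EuclideanSpace ℝ (Fin e)) : Prop :=
  Function.Injective
    (fun (α : EuclideanSpace ℝ (Fin e)) (i : Fin n) => (inner ℝ α (y i) : ℝ)) ∧
  Set.range (fun (α : EuclideanSpace ℝ (Fin e)) (i : Fin n) => (inner ℝ α (y i) : ℝ)) =
    {l : Fin n → ℝ | ∑ i, l i • x i = 0 ∧ ∑ i, l i = 0}

lemma mem_orthogonal_span_iff' {m : ℕ} (s : Set (EuclideanSpace ℝ (Fin m)))
    (v : EuclideanSpace ℝ (Fin m)) :
    v ∈ (Submodule.span ℝ s)ᗮ ↔ ∀ u ∈ s, inner ℝ u v = (0:ℝ) := by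
  constructor
  · intro h u hu; exact h u (Submodule.subset_span hu)
  · intro h u hu
    induction hu using Submodule.span_induction with
    | mem x hx => exact h x hx
    | zero => simp
    | add x y _ _ hx hy => simp [inner_add_left, hx, hy]
    | smul c x _ hx => simp [inner_smul_left, hx]

theorem stmt9 {d n : ℕ} (hd : 1 ≤ d) (hn : d + 2 ≤ n)
    (y : Fin n → EuclideanSpace ℝ (Fin (n - d - 1)))
    (hspan : Submodule.span ℝ (Set.range y) = ⊤)
    (hsum : ∑ i, y i = 0) :
    ∃ x : Fin n → EuclideanSpace ℝ (Fin d),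
      affineSpan ℝ (Set.range x) = ⊤ ∧ IsGaleTransform x y := by
  classical
  -- the evaluation map `T`
  let T : EuclideanSpace ℝ (Fin (n - d - 1)) →ₗ[ℝ] EuclideanSpace ℝ (Fin n) :=
    { toFun := fun α => WithLp.toLp 2 (fun i => inner ℝ α (y i) : Fin n → ℝ)
      map_add' := fun a b => PiLp.ext fun i => inner_add_left _ _ _
      map_smul' := fun c a => PiLp.ext fun i => real_inner_smul_left _ _ _ }
  have hTapp : ∀ α i, T α i = (inner ℝ α (y i) : ℝ) := fun _ _ => rfl
  have hTinj : Function.Injective T := by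
    rw [← LinearMap.ker_eq_bot, Submodule.eq_bot_iff]
    intro α hα
    have h1 : α ∈ (Submodule.span ℝ (Set.range y))ᗮ := by
      rw [mem_orthogonal_span_iff']
      rintro u ⟨i, rfl⟩
      rw [real_inner_comm]
      have := congrArg (fun w => w i) hα
      simpa [hTapp] using this
    rw [hspan, Submodule.top_orthogonal_eq_bot] at h1
    exact h1
  set V := LinearMap.range T with hV
  have hVrank : Module.finrank ℝ V = n - d - 1 := by
    rw [hV, LinearMap.finrank_range_of_inj hTinj, finrank_euclideanSpace_fin]
  set W := Vᗮ with hW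
  have hWrank : Module.finrank ℝ W = d + 1 := by
    have h2 := Submodule.finrank_add_finrank_orthogonal V
    rw [finrank_euclideanSpace_fin, hVrank, ← hW] at h2
    omega
  set u : EuclideanSpace ℝ (Fin n) := WithLp.toLp 2 (fun _ => 1 : Fin n → ℝ) with hu
  have hu0 : u ≠ 0 := by
    intro h
    have : (1:ℝ) = 0 := congrArg (fun w => w ⟨0, by omega⟩) h
    norm_num at this
  have huW : u ∈ W := by
    rw [hW, Submodule.mem_orthogonal]
    rintro w ⟨α, rfl⟩
    have h3 : (inner ℝ (T α) u : ℝ) = ∑ i, (inner ℝ α (y i) : ℝ) := by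
      simp [PiLp.inner_apply, hTapp, hu]
    rw [h3, ← inner_sum, hsum, inner_zero_right]
  set U := Submodule.span ℝ {u} with hU
  have hUW : U ≤ W := by
    rw [hU, Submodule.span_le, Set.singleton_subset_iff]; exact huW
  have hUrank : Module.finrank ℝ U = 1 := finrank_span_singleton hu0
  set W' := Uᗮ ⊓ W with hW'
  have hsup : U ⊔ W' = W := Submodule.sup_orthogonal_inf_of_hasOrthogonalProjection hUW
  have hdisj : Disjoint U W' := (Submodule.orthogonal_disjoint U).mono_right inf_le_left
  have hW'rank : Module.finrank ℝ W' = d := by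
    have h2 := Submodule.finrank_sup_add_finrank_inf_eq U W'
    rw [hsup, hdisj.eq_bot, finrank_bot, hUrank, hWrank] at h2
    omega
  let c : Module.Basis (Fin d) ℝ W' := (Module.finBasis ℝ W').reindex (finCongr hW'rank)
  let b : Fin d → EuclideanSpace ℝ (Fin n) := fun j => (c j : EuclideanSpace ℝ (Fin n))
  have hbspan : Submodule.span ℝ (Set.range b) = W' := by
    have h4 : Set.range b = (W'.subtype) '' Set.range c := by
      rw [← Set.range_comp]; rfl
    rw [h4, ← Submodule.map_span, c.span_eq, Submodule.map_top, Submodule.range_subtype]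
  set x : Fin n → EuclideanSpace ℝ (Fin d) := fun i => WithLp.toLp 2 (fun j => b j i : Fin d → ℝ) with hx
  have hVW : Wᗮ = V := by rw [hW, Submodule.orthogonal_orthogonal]
  have hWspan : W = Submodule.span ℝ ({u} ∪ Set.range b) := by
    rw [Submodule.span_union, hbspan, ← hU, hsup]
  have hkey : ∀ l : EuclideanSpace ℝ (Fin n),
      l ∈ V ↔ ((∀ j, (inner ℝ (b j) l : ℝ) = 0) ∧ (inner ℝ u l : ℝ) = 0) := by
    intro l
    rw [← hVW, hWspan, mem_orthogonal_span_iff']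
    constructor
    · intro h
      exact ⟨fun j => h (b j) (Or.inr ⟨j, rfl⟩), h u (Or.inl rfl)⟩
    · rintro ⟨h1, h2⟩ v (rfl | ⟨j, rfl⟩)
      · exact h2
      · exact h1 j
  have hsum_eq : ∀ l : EuclideanSpace ℝ (Fin n), (inner ℝ u l : ℝ) = ∑ i, l i := by
    intro l; simp [PiLp.inner_apply, hu]
  have hcoord : ∀ (l : EuclideanSpace ℝ (Fin n)) (j : Fin d),
      (∑ i, l i • x i) j = (inner ℝ (b j) l : ℝ) := by
    intro l j
    rw [WithLp.ofLp_sum, Finset.sum_apply]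
    simp [PiLp.inner_apply, hx, mul_comm]
  have hKer : {l : EuclideanSpace ℝ (Fin n) | ∑ i, l i • x i = 0 ∧ ∑ i, l i = 0}
      = (V : Set (EuclideanSpace ℝ (Fin n))) := by
    ext l
    simp only [Set.mem_setOf_eq, SetLike.mem_coe]
    rw [hkey l]
    constructor
    · rintro ⟨h1, h2⟩
      refine ⟨fun j => ?_, ?_⟩
      · rw [← hcoord l j, h1]; rfl
      · rw [hsum_eq]; exact h2
    · rintro ⟨h1, h2⟩
      refine ⟨PiLp.ext fun j => ?_, ?_⟩
      · rw [hcoord l j]; exact h1 j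
      · rw [← hsum_eq]; exact h2
  -- the auxiliary surjection for the affine span
  let S : EuclideanSpace ℝ (Fin n) →ₗ[ℝ] (EuclideanSpace ℝ (Fin d)) × ℝ :=
    { toFun := fun l => (WithLp.toLp 2 (fun j => inner ℝ (b j) l : Fin d → ℝ), (inner ℝ u l : ℝ))
      map_add' := fun a c' => Prod.ext (PiLp.ext fun j => inner_add_right _ _ _)
        (inner_add_right _ _ _)
      map_smul' := fun r a => Prod.ext (PiLp.ext fun j => real_inner_smul_right _ _ _)
        (real_inner_smul_right _ _ _) }
  have hkerS : LinearMap.ker S = V := by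
    ext l
    rw [LinearMap.mem_ker, hkey l]
    constructor
    · intro h
      have h1 := congrArg Prod.fst h
      have h2 := congrArg Prod.snd h
      exact ⟨fun j => congrArg (fun w => w j) h1, h2⟩
    · rintro ⟨h1, h2⟩
      exact Prod.ext (PiLp.ext fun j => h1 j) h2
  have hSsurj : Function.Surjective S := by
    rw [← LinearMap.range_eq_top]
    apply Submodule.eq_top_of_finrank_eq
    have h3 := LinearMap.finrank_range_add_finrank_ker S
    rw [hkerS, hVrank, finrank_euclideanSpace_fin] at h3
    rw [Module.finrank_prod, finrank_euclideanSpace_fin, Module.finrank_self]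
    omega
  have hxtop : affineSpan ℝ (Set.range x) = ⊤ := by
    have hne : (Set.range x).Nonempty := ⟨x ⟨0, by omega⟩, Set.mem_range_self _⟩
    rw [AffineSubspace.affineSpan_eq_top_iff_vectorSpan_eq_top_of_nonempty ℝ _ _ hne]
    rw [Submodule.eq_top_iff']
    intro v
    obtain ⟨l, hl⟩ := hSsurj (v, 0)
    have hl1 : ∀ j, (inner ℝ (b j) l : ℝ) = v j := fun j => congrArg (fun w => w j) (congrArg Prod.fst hl)
    have hl2 : (inner ℝ u l : ℝ) = 0 := congrArg Prod.snd hl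
    have hxv : ∑ i, l i • x i = v := PiLp.ext fun j => by rw [hcoord l j, hl1 j]
    have hls : ∑ i, l i = 0 := by rw [← hsum_eq l]; exact hl2
    set i0 : Fin n := ⟨0, by omega⟩ with hi0
    have hv : v = ∑ i, l i • (x i - x i0) := by
      simp only [smul_sub, Finset.sum_sub_distrib, ← Finset.sum_smul, hls, hxv, zero_smul,
        sub_zero]
    rw [hv]
    refine Submodule.sum_mem _ fun i _ => Submodule.smul_mem _ _ ?_
    exact vsub_mem_vectorSpan ℝ (Set.mem_range_self i) (Set.mem_range_self i0)
  refine ⟨x, hxtop, fun a a' h => hTinj ((WithLp.ext_iff 2).2 h), ?_⟩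
  ext l
  constructor
  · rintro ⟨α, rfl⟩
    have : T α ∈ V := LinearMap.mem_range_self T α
    rw [← SetLike.mem_coe, ← hKer] at this
    exact this
  · intro hl
    have : WithLp.toLp 2 l ∈ V := by rw [← SetLike.mem_coe, ← hKer]; exact hl
    obtain ⟨α, hα⟩ := this
    exact ⟨α, congrArg WithLp.ofLp hα⟩
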